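/- For every sufficiently large n, with k = ⌈(1/6)·log₂ n⌉, the quantity 4^n·((1 − 4k/4^k)^{n/k} + (1/k)·(1 − (1 − 4k/4^k)^{n/k})) is at most 4^n · 12/log₂ n. -/

import Mathlib

lemma aux_nat (j : ℕ) (hj : 1 ≤ j) : (j + 1) * (4 ^ j + 1) ≤ 64 ^ j := by
  induction j with
  | zero => omega
  | succ n ih =>
    rcases Nat.eq_zero_or_pos n with h | h
    · subst h; norm_num
    · have h1 := ih h
      have h2 : (0:ℕ) < 4 ^ n := Nat.pow_pos (by norm_num)
      calc (n + 1 + 1) * (4 ^ (n + 1) + 1)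
          ≤ (2 * (n + 1)) * (4 * (4 ^ n + 1)) := by
            apply Nat.mul_le_mul
            · omega
            · rw [pow_succ]; omega
        _ = 8 * ((n + 1) * (4 ^ n + 1)) := by ring
        _ ≤ 8 * 64 ^ n := Nat.mul_le_mul_left _ h1
        _ ≤ 64 ^ (n + 1) := by rw [pow_succ]; nlinarith [Nat.one_le_iff_ne_zero.2 (pow_ne_zero n (show (64:ℕ) ≠ 0 by norm_num))]

lemma aux_nat2 (k : ℕ) (hk : 2 ≤ k) : 8 * k ≤ 4 ^ k := by
  induction k with
  | zero => omega
  | succ n ih =>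
    rcases Nat.lt_or_ge n 2 with h | h
    · interval_cases n
      · omega
      · norm_num
    · have := ih h
      have h2 : (0:ℕ) < 4 ^ n := Nat.pow_pos (by norm_num)
      rw [pow_succ]; nlinarith

theorem stmt9 :
    ∃ N : ℕ, ∀ n : ℕ, N ≤ n → ∀ k : ℕ, k = ⌈Real.logb 2 n / 6⌉₊ →
      (4 : ℝ) ^ n * ((1 - 4 * k / 4 ^ k : ℝ) ^ ((n : ℝ) / k) +
          (1 / k) * (1 - (1 - 4 * k / 4 ^ k : ℝ) ^ ((n : ℝ) / k))) ≤
        (4 : ℝ) ^ n * 12 / Real.logb 2 n := by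
  use 100
  intro n hn k hk
  have hnR : (100:ℝ) ≤ n := by exact_mod_cast hn
  have hnpos : (0:ℝ) < n := by linarith
  have hlogpos : 0 < Real.logb 2 n := Real.logb_pos (by norm_num) (by linarith)
  -- log₂ 64 = 6, and n > 64 so logb 2 n > 6
  have hlog64 : Real.logb 2 64 = 6 := by
    rw [show (64:ℝ) = 2 ^ (6:ℕ) by norm_num, Real.logb_pow, Real.logb_self_eq_one] <;> norm_num
  have hlog6 : 6 < Real.logb 2 n := by
    rw [← hlog64]
    exact Real.logb_lt_logb (by norm_num) (by norm_num) (by linarith)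
  have hk2 : 2 ≤ k := by
    have : 1 < k := by
      rw [hk, Nat.lt_ceil]
      push_cast
      linarith
    omega
  have hkR : (0:ℝ) < k := by exact_mod_cast (by omega : 0 < k)
  have h6k : Real.logb 2 n ≤ 6 * k := by
    have := Nat.le_ceil (Real.logb 2 n / 6)
    rw [← hk] at this
    linarith
  -- n > 64 ^ (k-1)
  have hlt : 6 * ((k - 1 : ℕ) : ℝ) < Real.logb 2 n := by
    have h : ((k - 1 : ℕ) : ℝ) < Real.logb 2 n / 6 := by
      rw [← Nat.lt_ceil, ← hk]
      omega
    linarith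
  have h64 : ((64 ^ (k - 1) : ℕ) : ℝ) < n := by
    have h1 : ((64 ^ (k - 1) : ℕ) : ℝ) = (2:ℝ) ^ (((6 * (k - 1) : ℕ)) : ℝ) := by
      rw [Real.rpow_natCast]
      push_cast
      rw [pow_mul]
      norm_num
    have h2 : (2:ℝ) ^ (Real.logb 2 n) = n := Real.rpow_logb (by norm_num) (by norm_num) hnpos
    rw [h1, ← h2]
    apply Real.rpow_lt_rpow_of_exponent_lt (by norm_num)
    push_cast
    linarith
  have h64n : 64 ^ (k - 1) < n := by exact_mod_cast h64
  have hkn : k * (4 ^ (k - 1) + 1) ≤ n := by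
    have := aux_nat (k - 1) (by omega)
    have hke : (k - 1) + 1 = k := by omega
    rw [hke] at this
    omega
  -- m = n / k, m ≥ 4^(k-1)
  set m : ℕ := n / k with hm
  have hm1 : 4 ^ (k - 1) ≤ m := by
    rw [hm, Nat.le_div_iff_mul_le (by omega : 0 < k)]
    nlinarith [hkn]
  have hmle : (m : ℝ) ≤ (n : ℝ) / k := Nat.cast_div_le
  -- x = 4k/4^k ∈ (0, 1/2]
  set x : ℝ := 4 * k / 4 ^ k with hx
  have h4kpos : (0:ℝ) < 4 ^ k := by positivity
  have hxpos : 0 < x := by rw [hx]; positivity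
  have hxhalf : x ≤ 1 / 2 := by
    have h8 := aux_nat2 k hk2
    have h8R : (8:ℝ) * k ≤ 4 ^ k := by exact_mod_cast h8
    rw [hx, div_le_div_iff₀ h4kpos (by norm_num)]
    linarith
  have hb0 : (0:ℝ) < 1 - x := by linarith
  have hb1 : (1:ℝ) - x ≤ 1 := by linarith
  -- f ≤ (1-x)^m
  have hf : (1 - 4 * k / 4 ^ k : ℝ) ^ ((n : ℝ) / k) ≤ (1 - x) ^ m := by
    rw [← Real.rpow_natCast (1 - x) m]
    exact Real.rpow_le_rpow_of_exponent_ge hb0 hb1 hmle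
  -- (1-x)^m ≤ exp(-(m*x))
  have h1 : 1 - x ≤ Real.exp (-x) := by
    have := Real.add_one_le_exp (-x); linarith
  have h2 : (1 - x) ^ m ≤ Real.exp (-x) ^ m := pow_le_pow_left₀ hb0.le h1 m
  have h3 : Real.exp (-x) ^ m = Real.exp (-((m : ℝ) * x)) := by
    rw [← Real.exp_nat_mul]; ring_nf
  -- k ≤ m * x
  have h4k : (4:ℝ) ^ k = 4 ^ (k - 1) * 4 := by
    rw [← pow_succ]
    congr 1
    omega
  have hkey : (4:ℝ) ^ (k - 1) * x = k := by
    rw [hx, h4k]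
    field_simp
  have hm1R : ((4:ℝ) ^ (k - 1)) ≤ m := by
    have : ((4 ^ (k - 1) : ℕ) : ℝ) ≤ m := by exact_mod_cast hm1
    push_cast at this
    linarith
  have hmx : (k : ℝ) ≤ (m : ℝ) * x := by
    rw [← hkey]
    exact mul_le_mul_of_nonneg_right hm1R hxpos.le
  -- exp(-(m*x)) ≤ 1/k
  have h5 : Real.exp (-((m : ℝ) * x)) ≤ 1 / k := by
    rw [Real.exp_neg, one_div]
    apply inv_anti₀ hkR
    calc (k : ℝ) ≤ (m : ℝ) * x := hmx
      _ ≤ Real.exp ((m : ℝ) * x) := by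
          have := Real.add_one_le_exp ((m : ℝ) * x); linarith
  have hfk : (1 - 4 * k / 4 ^ k : ℝ) ^ ((n : ℝ) / k) ≤ 1 / k := by
    calc (1 - 4 * k / 4 ^ k : ℝ) ^ ((n : ℝ) / k) ≤ (1 - x) ^ m := hf
      _ ≤ Real.exp (-x) ^ m := h2
      _ = Real.exp (-((m : ℝ) * x)) := h3
      _ ≤ 1 / k := h5
  have hf0 : 0 ≤ (1 - 4 * k / 4 ^ k : ℝ) ^ ((n : ℝ) / k) := by
    apply Real.rpow_nonneg
    rw [← hx] at *
    linarith
  set f : ℝ := (1 - 4 * k / 4 ^ k : ℝ) ^ ((n : ℝ) / k) with hfdef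
  have hinner : f + (1 / k) * (1 - f) ≤ 2 / k := by
    have h1k : (0:ℝ) ≤ 1 / k := by positivity
    have : (1 / (k:ℝ)) * (1 - f) ≤ (1 / k) * 1 :=
      mul_le_mul_of_nonneg_left (by linarith) h1k
    have h2k : (2:ℝ) / k = 1 / k + 1 / k := by ring
    rw [h2k]
    linarith
  have hfin : (2:ℝ) / k ≤ 12 / Real.logb 2 n := by
    rw [div_le_div_iff₀ hkR hlogpos]
    linarith
  have h4npos : (0:ℝ) < 4 ^ n := by positivity
  calc (4:ℝ) ^ n * (f + (1 / k) * (1 - f)) ≤ (4:ℝ) ^ n * (2 / k) :=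
        mul_le_mul_of_nonneg_left hinner h4npos.le
    _ ≤ (4:ℝ) ^ n * (12 / Real.logb 2 n) :=
        mul_le_mul_of_nonneg_left hfin h4npos.le
    _ = (4:ℝ) ^ n * 12 / Real.logb 2 n := by ring
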